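/- Let n ≥ 1 and let γ = (τ, s) be a skew-symmetric (n,n)-clan on 2n positions that avoids the pattern (1,2,1,2). Then the permutation u(γ) ∈ S_{2n} is a signed element of S_{2n}, i.e., u(γ)(2n+1−k) = 2n+1−u(γ)(k) for all k ∈ {1,…,2n}. -/

import Mathlib

/-- Uniqueness lemma: a permutation characterized by the "membership ↔ value < n"
condition together with strict decrease on the class and its complement has each
value determined by a counting formula. -/
lemma clan_perm_val_eq {m n : ℕ} (P : Fin m → Prop) [DecidablePred P]
    (π : Equiv.Perm (Fin m))
    (hmem : ∀ i, P i ↔ (π i : ℕ) < n)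
    (hA : ∀ i j, P i → P j → i < j → π j < π i)
    (hB : ∀ i j, ¬P i → ¬P j → i < j → π j < π i)
    (i : Fin m) :
    (π i : ℕ) = if P i then (Finset.univ.filter (fun j => P j ∧ i < j)).card
      else n + (Finset.univ.filter (fun j => ¬P j ∧ i < j)).card := by
  by_cases hPi : P i
  · rw [if_pos hPi]
    have hcard : (Finset.univ.filter (fun j => P j ∧ i < j)).card
        = (Finset.Iio (π i)).card := by
      apply Finset.card_bij (fun j _ => π j)
      · intro j hj
        simp only [Finset.mem_filter, Finset.mem_univ, true_and] at hj
        simp only [Finset.mem_Iio]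
        exact hA i j hPi hj.1 hj.2
      · intro a _ b _ h
        exact π.injective h
      · intro v hv
        simp only [Finset.mem_Iio] at hv
        refine ⟨π.symm v, ?_, by simp⟩
        have hv' : (v : ℕ) < n := lt_trans (by exact_mod_cast hv) ((hmem i).mp hPi)
        have hPj : P (π.symm v) := (hmem _).mpr (by simpa using hv')
        simp only [Finset.mem_filter, Finset.mem_univ, true_and]
        refine ⟨hPj, ?_⟩
        rcases lt_trichotomy i (π.symm v) with h | h | h
        · exact h
        · exfalso
          rw [h, Equiv.apply_symm_apply] at hv
          exact lt_irrefl _ hv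
        · exfalso
          have := hA _ _ hPj hPi h
          simp only [Equiv.apply_symm_apply] at this
          exact absurd hv (not_lt.mpr this.le)
    rw [hcard, Fin.card_Iio]
  · rw [if_neg hPi]
    have hni : n ≤ (π i : ℕ) := le_of_not_gt (fun h => hPi ((hmem i).mpr h))
    have hnm : n < m := lt_of_le_of_lt hni (π i).isLt
    set a : Fin m := ⟨n, hnm⟩ with ha
    have hcard : (Finset.univ.filter (fun j => ¬P j ∧ i < j)).card
        = (Finset.Ico a (π i)).card := by
      apply Finset.card_bij (fun j _ => π j)
      · intro j hj
        simp only [Finset.mem_filter, Finset.mem_univ, true_and] at hj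
        simp only [Finset.mem_Ico]
        constructor
        · have : ¬ ((π j : ℕ) < n) := fun h => hj.1 ((hmem j).mpr h)
          exact Fin.le_def.mpr (le_of_not_gt this)
        · exact hB i j hPi hj.1 hj.2
      · intro x _ y _ h
        exact π.injective h
      · intro v hv
        simp only [Finset.mem_Ico] at hv
        refine ⟨π.symm v, ?_, by simp⟩
        have hv' : n ≤ (v : ℕ) := Fin.le_def.mp hv.1
        have hPj : ¬ P (π.symm v) := by
          intro h
          have := (hmem _).mp h
          simp only [Equiv.apply_symm_apply] at this
          omega
        simp only [Finset.mem_filter, Finset.mem_univ, true_and]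
        refine ⟨hPj, ?_⟩
        rcases lt_trichotomy i (π.symm v) with h | h | h
        · exact h
        · exfalso
          rw [h, Equiv.apply_symm_apply] at hv
          exact lt_irrefl _ hv.2
        · exfalso
          have := hB _ _ hPj hPi h
          simp only [Equiv.apply_symm_apply] at this
          exact absurd hv.2 (not_lt.mpr this.le)
    rw [hcard, Fin.card_Ico]
    have ha' : (a : ℕ) = n := rfl
    omega

/-- For a skew-symmetric `(n,n)`-clan `γ = (τ, s)` on `2n` positions
(positions modeled zero-based by `Fin (2*n)`) avoiding the pattern `(1,2,1,2)`,
the permutation `u(γ)` is a signed element of `S_{2n}`.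
Here `π = u(γ)` is characterized by: the set
`A = {i : (τ i = i ∧ s i = 1) ∨ τ i < i}` is exactly the set of positions with
value `< n` (zero-based values `n-1, …, 0` correspond to one-based `n, …, 1`),
`π` is strictly decreasing along `A`, and strictly decreasing along the
complement of `A` (whose values are the zero-based `2n-1, …, n`). -/
theorem stmt_0 (n : ℕ) (hn : 1 ≤ n)
    (τ : Equiv.Perm (Fin (2 * n))) (s : Fin (2 * n) → ℤ)
    -- τ is an involution
    (hinv : ∀ i, τ (τ i) = i)
    -- signs of fixed points are ±1
    (hsgn : ∀ i, τ i = i → s i = 1 ∨ s i = -1)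
    -- (n,n)-clan: #(plus fixed points) - #(minus fixed points) = n - n = 0
    (hbal : (Finset.univ.filter (fun i => τ i = i ∧ s i = 1)).card
          = (Finset.univ.filter (fun i => τ i = i ∧ s i = -1)).card)
    -- skew-symmetry: τ ∘ ρ = ρ ∘ τ (with ρ(i) = 2n+1-i, i.e. `Fin.rev`), and
    -- every fixed point i has ρ(i) fixed with the opposite sign
    (hskew₁ : ∀ i, τ i.rev = (τ i).rev)
    (hskew₂ : ∀ i, τ i = i → τ i.rev = i.rev ∧ s i.rev = - s i)
    -- γ avoids the pattern (1,2,1,2)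
    (havoid : ¬ ∃ i j k l : Fin (2 * n), i < j ∧ j < k ∧ k < l ∧ τ i = k ∧ τ j = l)
    -- π = u(γ)
    (π : Equiv.Perm (Fin (2 * n)))
    (hπmem : ∀ i, ((τ i = i ∧ s i = 1) ∨ τ i < i) ↔ (π i : ℕ) < n)
    (hπdecA : ∀ i j : Fin (2 * n), ((τ i = i ∧ s i = 1) ∨ τ i < i) →
        ((τ j = j ∧ s j = 1) ∨ τ j < j) → i < j → π j < π i)
    (hπdecB : ∀ i j : Fin (2 * n), ¬ ((τ i = i ∧ s i = 1) ∨ τ i < i) →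
        ¬ ((τ j = j ∧ s j = 1) ∨ τ j < j) → i < j → π j < π i) :
    ∀ k : Fin (2 * n), π k.rev = (π k).rev := by
  classical
  set P : Fin (2 * n) → Prop := fun i => (τ i = i ∧ s i = 1) ∨ τ i < i with hPdef
  -- key fact: P (rev i) ↔ ¬ P i
  have hrev : ∀ i, P i.rev ↔ ¬ P i := by
    intro i
    by_cases hfix : τ i = i
    · obtain ⟨h1, h2⟩ := hskew₂ i hfix
      have hPi : P i ↔ s i = 1 := by
        constructor
        · rintro (⟨_, hs⟩ | hlt)
          · exact hs
          · rw [hfix] at hlt; exact absurd hlt (lt_irrefl _)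
        · exact fun hs => Or.inl ⟨hfix, hs⟩
      have hPr : P i.rev ↔ s i = -1 := by
        constructor
        · rintro (⟨_, hs⟩ | hlt)
          · rw [h2] at hs; linarith
          · rw [h1] at hlt; exact absurd hlt (lt_irrefl _)
        · intro hs
          exact Or.inl ⟨h1, by rw [h2, hs]; norm_num⟩
      rw [hPi, hPr]
      rcases hsgn i hfix with hs | hs <;> simp [hs]
    · have hfr : τ i.rev ≠ i.rev := by
        rw [hskew₁ i]
        exact fun h => hfix (Fin.rev_injective h)
      have hPi : P i ↔ τ i < i := by
        constructor
        · rintro (⟨h, _⟩ | hlt)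
          · exact absurd h hfix
          · exact hlt
        · exact fun h => Or.inr h
      have hPr : P i.rev ↔ i < τ i := by
        constructor
        · rintro (⟨h, _⟩ | hlt)
          · exact absurd h hfr
          · rw [hskew₁ i] at hlt
            exact Fin.rev_lt_rev.mp hlt
        · intro h
          refine Or.inr ?_
          rw [hskew₁ i]
          exact Fin.rev_lt_rev.mpr h
      rw [hPi, hPr]
      constructor
      · exact fun h => not_lt.mpr h.le
      · intro h
        exact lt_of_le_of_ne (not_lt.mp h) (Ne.symm hfix)
  have hrev' : ∀ i, P i ↔ ¬ P i.rev := by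
    intro i
    have := hrev i.rev
    rw [Fin.rev_rev] at this
    tauto
  -- rev x < n ↔ n ≤ x
  have hrevlt : ∀ x : Fin (2 * n), ((x.rev : ℕ) < n ↔ n ≤ (x : ℕ)) := by
    intro x
    have h1 := Fin.val_rev x
    have h2 := x.isLt
    omega
  -- the conjugated permutation
  set f : Equiv.Perm (Fin (2 * n)) := (Fin.revPerm.trans π).trans Fin.revPerm with hfdef
  have hf : ∀ i, f i = (π i.rev).rev := fun i => rfl
  have hmem' : ∀ i, P i ↔ (f i : ℕ) < n := by
    intro i
    rw [hf, hrevlt, hrev' i]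
    constructor
    · intro h
      exact le_of_not_gt (fun hlt => h ((hπmem i.rev).mpr hlt))
    · intro h hP
      exact absurd ((hπmem i.rev).mp hP) (not_lt.mpr h)
  have hA' : ∀ i j, P i → P j → i < j → f j < f i := by
    intro i j hi hj hij
    rw [hf, hf, Fin.rev_lt_rev]
    exact hπdecB j.rev i.rev (fun h => ((hrev j).mp h) hj)
      (fun h => ((hrev i).mp h) hi) (Fin.rev_lt_rev.mpr hij)
  have hB' : ∀ i j, ¬P i → ¬P j → i < j → f j < f i := by
    intro i j hi hj hij
    rw [hf, hf, Fin.rev_lt_rev]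
    exact hπdecA j.rev i.rev ((hrev j).mpr hj) ((hrev i).mpr hi)
      (Fin.rev_lt_rev.mpr hij)
  have key1 := clan_perm_val_eq P π hπmem hπdecA hπdecB
  have key2 := clan_perm_val_eq P f hmem' hA' hB'
  intro k
  have hval : (f k : ℕ) = (π k : ℕ) := by rw [key1 k, key2 k]
  have hfk : f k = π k := Fin.ext hval
  rw [← hfk, hf, Fin.rev_rev]
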